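/- Let A be a Hopf algebra with adjoint action ad. A linear functional φ on A satisfies (id ⊗ φ) ∘ ad = φ(·)·1 (ad-invariance) if and only if φ lies in the center of the convolution algebra A', i.e. φ ⋆ ψ = ψ ⋆ φ for all linear functionals ψ on A. -/

import Mathlib

open TensorProduct Coalgebra LinearMap

variable {A : Type} [Ring A] [HopfAlgebra ℂ A]

/-- The adjoint action `ad(a) = a₍₁₎ S(a₍₃₎) ⊗ a₍₂₎` of a Hopf algebra. -/
noncomputable def adAction : A →ₗ[ℂ] A ⊗[ℂ] A :=
  (LinearMap.rTensor A (LinearMap.mul' ℂ A)) ∘ₗ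
  (TensorProduct.assoc ℂ A A A).symm.toLinearMap ∘ₗ
  (LinearMap.lTensor A
    ((LinearMap.rTensor A (HopfAlgebra.antipode (R := ℂ) (A := A))) ∘ₗ
      (TensorProduct.comm ℂ A A).toLinearMap)) ∘ₗ
  (TensorProduct.assoc ℂ A A A).toLinearMap ∘ₗ
  (LinearMap.rTensor A (Coalgebra.comul (R := ℂ))) ∘ₗ Coalgebra.comul (R := ℂ)

/-- Convolution of functionals: `(φ ⋆ ψ)(a) = (φ ⊗ ψ)(Δ a)`. -/
noncomputable def conv (φ ψ : A →ₗ[ℂ] ℂ) : A →ₗ[ℂ] ℂ :=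
  (LinearMap.mul' ℂ ℂ) ∘ₗ (TensorProduct.map φ ψ) ∘ₗ Coalgebra.comul (R := ℂ)

/-- A functional `φ` is ad-invariant if `(id ⊗ φ)(ad a) = φ(a) • 1`. -/
def IsAdInvariant (φ : A →ₗ[ℂ] ℂ) : Prop :=
  ∀ a : A, (TensorProduct.rid ℂ A) ((LinearMap.lTensor A φ) (adAction a)) = φ a • (1 : A)

section Aux

local notation "S" => HopfAlgebra.antipode (R := ℂ) (A := A)

/-- `Lm φ (a) = φ(a₁) a₂`. -/
noncomputable def Lm (φ : A →ₗ[ℂ] ℂ) : A →ₗ[ℂ] A :=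
  (TensorProduct.lid ℂ A).toLinearMap ∘ₗ (LinearMap.rTensor A φ) ∘ₗ Coalgebra.comul (R := ℂ)

/-- `Rm φ (a) = a₁ φ(a₂)`. -/
noncomputable def Rm (φ : A →ₗ[ℂ] ℂ) : A →ₗ[ℂ] A :=
  (TensorProduct.rid ℂ A).toLinearMap ∘ₗ (LinearMap.lTensor A φ) ∘ₗ Coalgebra.comul (R := ℂ)

lemma Lm_repr (φ : A →ₗ[ℂ] ℂ) {b : A} (r : Coalgebra.Repr ℂ b (A × A)) :
    Lm φ b = ∑ i ∈ r.index, φ (r.left i) • r.right i := by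
  simp only [Lm, LinearMap.comp_apply, ← r.eq, map_sum, LinearMap.rTensor_tmul,
    LinearEquiv.coe_coe, TensorProduct.lid_tmul]

lemma Rm_repr (φ : A →ₗ[ℂ] ℂ) {b : A} (r : Coalgebra.Repr ℂ b (A × A)) :
    Rm φ b = ∑ i ∈ r.index, φ (r.right i) • r.left i := by
  simp only [Rm, LinearMap.comp_apply, ← r.eq, map_sum, LinearMap.lTensor_tmul,
    LinearEquiv.coe_coe, TensorProduct.rid_tmul]

lemma conv_repr (φ ψ : A →ₗ[ℂ] ℂ) {b : A} (r : Coalgebra.Repr ℂ b (A × A)) :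
    conv φ ψ b = ∑ i ∈ r.index, φ (r.left i) * ψ (r.right i) := by
  simp only [conv, LinearMap.comp_apply, ← r.eq, map_sum, TensorProduct.map_tmul,
    LinearMap.mul'_apply]

lemma conv_eq_L (φ ψ : A →ₗ[ℂ] ℂ) (b : A) : conv φ ψ b = ψ (Lm φ b) := by
  rw [conv_repr φ ψ (ℛ ℂ b), Lm_repr φ (ℛ ℂ b), map_sum]
  simp [smul_eq_mul, mul_comm]

lemma conv_eq_R (φ ψ : A →ₗ[ℂ] ℂ) (b : A) : conv ψ φ b = ψ (Rm φ b) := by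
  rw [conv_repr ψ φ (ℛ ℂ b), Rm_repr φ (ℛ ℂ b), map_sum]
  simp [smul_eq_mul, mul_comm]

lemma central_iff_LR (φ : A →ₗ[ℂ] ℂ) :
    (∀ ψ : A →ₗ[ℂ] ℂ, conv φ ψ = conv ψ φ) ↔ Lm φ = Rm φ := by
  constructor
  · intro h
    ext b
    rw [← sub_eq_zero, ← Module.forall_dual_apply_eq_zero_iff ℂ (Lm φ b - Rm φ b)]
    intro ψ
    rw [map_sub, sub_eq_zero, ← conv_eq_L φ ψ b, ← conv_eq_R φ ψ b, h ψ]
  · intro h ψ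
    ext b
    rw [conv_eq_L φ ψ b, conv_eq_R φ ψ b, h]

lemma adAction_repr {a : A} (r : Coalgebra.Repr ℂ a (A × A)) (c : ∀ i, Coalgebra.Repr ℂ (r.left i) (A × A)) :
    adAction a = ∑ i ∈ r.index, ∑ j ∈ (c i).index,
      ((c i).left j * S (r.right i)) ⊗ₜ[ℂ] (c i).right j := by
  simp only [adAction, LinearMap.comp_apply, ← r.eq, map_sum, LinearMap.rTensor_tmul]
  refine Finset.sum_congr rfl fun i _ => ?_
  rw [← (c i).eq]
  simp [TensorProduct.sum_tmul, LinearMap.mul'_apply]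

lemma T_repr (φ : A →ₗ[ℂ] ℂ) {a : A} (r : Coalgebra.Repr ℂ a (A × A))
    (c : ∀ i, Coalgebra.Repr ℂ (r.left i) (A × A)) :
    (TensorProduct.rid ℂ A) ((LinearMap.lTensor A φ) (adAction a)) =
      ∑ i ∈ r.index, ∑ j ∈ (c i).index,
        φ ((c i).right j) • ((c i).left j * S (r.right i)) := by
  rw [adAction_repr r c]
  simp [map_sum]

/-- `∑ ε(a₂) • a₁ = a`. -/
lemma sum_counit_smul {b : A} (r : Coalgebra.Repr ℂ b (A × A)) :
    ∑ i ∈ r.index, Coalgebra.counit (R := ℂ) (r.right i) • r.left i = b := by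
  calc ∑ i ∈ r.index, Coalgebra.counit (R := ℂ) (r.right i) • r.left i
      = (TensorProduct.rid ℂ A) (∑ i ∈ r.index,
          r.left i ⊗ₜ[ℂ] Coalgebra.counit (R := ℂ) (r.right i)) := by
        rw [map_sum]; simp
    _ = (TensorProduct.rid ℂ A) (b ⊗ₜ[ℂ] 1) := by rw [Coalgebra.sum_tmul_counit_eq r]
    _ = b := by simp

/-- `∑ ε(a₁) • a₂ = a`. -/
lemma sum_smul_counit {b : A} (r : Coalgebra.Repr ℂ b (A × A)) :
    ∑ i ∈ r.index, Coalgebra.counit (R := ℂ) (r.left i) • r.right i = b := by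
  calc ∑ i ∈ r.index, Coalgebra.counit (R := ℂ) (r.left i) • r.right i
      = (TensorProduct.lid ℂ A) (∑ i ∈ r.index,
          Coalgebra.counit (R := ℂ) (r.left i) ⊗ₜ[ℂ] r.right i) := by
        rw [map_sum]; simp
    _ = (TensorProduct.lid ℂ A) ((1 : ℂ) ⊗ₜ[ℂ] b) := by rw [Coalgebra.sum_counit_tmul_eq r]
    _ = b := by simp

lemma LR_of_adInv (φ : A →ₗ[ℂ] ℂ) (h : IsAdInvariant φ) : Lm φ = Rm φ := by
  ext b
  set r : Coalgebra.Repr ℂ b (A × A) := ℛ ℂ b with hr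
  set c : ∀ i, Coalgebra.Repr ℂ (r.left i) (A × A) := fun i => ℛ ℂ (r.left i) with hc
  set e : ∀ i, Coalgebra.Repr ℂ (r.right i) (A × A) := fun i => ℛ ℂ (r.right i) with he
  set d : ∀ i (j : (c i).ι), Coalgebra.Repr ℂ ((c i).left j) (A × A) :=
    fun i j => ℛ ℂ ((c i).left j) with hd
  have coas := Coalgebra.sum_tmul_tmul_eq r c e
  -- apply p ⊗ (q ⊗ y) ↦ (Rm φ p) * (S q * y) to coassociativity
  set G : A ⊗[ℂ] (A ⊗[ℂ] A) →ₗ[ℂ] A :=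
    (LinearMap.mul' ℂ A) ∘ₗ
      TensorProduct.map (Rm φ) ((LinearMap.mul' ℂ A) ∘ₗ (LinearMap.rTensor A S)) with hG
  have key := congrArg G coas
  simp only [map_sum, hG, LinearMap.comp_apply, TensorProduct.map_tmul,
    LinearMap.rTensor_tmul, LinearMap.mul'_apply] at key
  -- LHS of key equals `Lm φ b`
  have hLHS : ∑ i ∈ r.index, ∑ j ∈ (c i).index,
      Rm φ ((c i).left j) * (S ((c i).right j) * r.right i) =
      ∑ i ∈ r.index, φ (r.left i) • r.right i := by
    refine Finset.sum_congr rfl fun i _ => ?_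
    have hTi : ∑ j ∈ (c i).index, ∑ k ∈ (d i j).index,
        φ ((d i j).right k) • ((d i j).left k * S ((c i).right j)) = φ (r.left i) • 1 :=
      (T_repr φ (c i) (d i)).symm.trans (h (r.left i))
    calc ∑ j ∈ (c i).index, Rm φ ((c i).left j) * (S ((c i).right j) * r.right i)
        = ∑ j ∈ (c i).index, ∑ k ∈ (d i j).index,
            (φ ((d i j).right k) • ((d i j).left k * S ((c i).right j))) * r.right i := by
          refine Finset.sum_congr rfl fun j _ => ?_
          rw [Rm_repr φ (d i j), Finset.sum_mul]
          refine Finset.sum_congr rfl fun k _ => ?_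
          rw [smul_mul_assoc, smul_mul_assoc, mul_assoc]
      _ = (∑ j ∈ (c i).index, ∑ k ∈ (d i j).index,
            φ ((d i j).right k) • ((d i j).left k * S ((c i).right j))) * r.right i := by
          rw [Finset.sum_mul]
          exact Finset.sum_congr rfl fun j _ => (Finset.sum_mul _ _ _).symm
      _ = φ (r.left i) • r.right i := by rw [hTi, smul_mul_assoc, one_mul]
  -- RHS of key equals `Rm φ b`
  have hRHS : ∑ i ∈ r.index, ∑ j ∈ (e i).index,
      Rm φ (r.left i) * (S ((e i).left j) * (e i).right j) = Rm φ b := by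
    calc ∑ i ∈ r.index, ∑ j ∈ (e i).index,
        Rm φ (r.left i) * (S ((e i).left j) * (e i).right j)
        = ∑ i ∈ r.index, Rm φ (r.left i) *
            (∑ j ∈ (e i).index, S ((e i).left j) * (e i).right j) := by
          exact Finset.sum_congr rfl fun i _ => (Finset.mul_sum _ _ _).symm
      _ = ∑ i ∈ r.index, Coalgebra.counit (R := ℂ) (r.right i) • Rm φ (r.left i) := by
          refine Finset.sum_congr rfl fun i _ => ?_
          rw [HopfAlgebra.sum_antipode_mul_eq_smul (e i), mul_smul_comm, mul_one]
      _ = Rm φ b := by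
          have hb := congrArg (Rm φ) (_root_.sum_counit_smul r)
          rw [map_sum] at hb
          simp only [map_smul] at hb
          exact hb
  calc Lm φ b = ∑ i ∈ r.index, φ (r.left i) • r.right i := Lm_repr φ r
    _ = ∑ i ∈ r.index, ∑ j ∈ (c i).index,
          Rm φ ((c i).left j) * (S ((c i).right j) * r.right i) := hLHS.symm
    _ = ∑ i ∈ r.index, ∑ j ∈ (e i).index,
          Rm φ (r.left i) * (S ((e i).left j) * (e i).right j) := key
    _ = Rm φ b := hRHS

lemma adInv_of_LR (φ : A →ₗ[ℂ] ℂ) (h : Lm φ = Rm φ) : IsAdInvariant φ := by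
  intro a
  set r : Coalgebra.Repr ℂ a (A × A) := ℛ ℂ a with hr
  set c : ∀ i, Coalgebra.Repr ℂ (r.left i) (A × A) := fun i => ℛ ℂ (r.left i) with hc
  set e : ∀ i, Coalgebra.Repr ℂ (r.right i) (A × A) := fun i => ℛ ℂ (r.right i) with he
  have coas := Coalgebra.sum_tmul_tmul_eq r c e
  -- G₂ : u ⊗ (v ⊗ y) ↦ u * (φ(v) • S y)
  set inner1 : A ⊗[ℂ] A →ₗ[ℂ] A :=
    S ∘ₗ (TensorProduct.lid ℂ A).toLinearMap ∘ₗ (LinearMap.rTensor A φ) with hinner1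
  set G2 : A ⊗[ℂ] (A ⊗[ℂ] A) →ₗ[ℂ] A :=
    (LinearMap.mul' ℂ A) ∘ₗ TensorProduct.map LinearMap.id inner1 with hG2
  have key2 := congrArg G2 coas
  simp only [map_sum, hG2, hinner1, LinearMap.comp_apply, TensorProduct.map_tmul,
    LinearMap.rTensor_tmul, LinearEquiv.coe_coe, TensorProduct.lid_tmul, LinearMap.id_coe,
    id_eq, map_smul, LinearMap.mul'_apply] at key2
  -- G₃ : u ⊗ (v ⊗ y) ↦ u * (φ(y) • S v)
  set inner2 : A ⊗[ℂ] A →ₗ[ℂ] A :=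
    S ∘ₗ (TensorProduct.rid ℂ A).toLinearMap ∘ₗ (LinearMap.lTensor A φ) with hinner2
  set G3 : A ⊗[ℂ] (A ⊗[ℂ] A) →ₗ[ℂ] A :=
    (LinearMap.mul' ℂ A) ∘ₗ TensorProduct.map LinearMap.id inner2 with hG3
  have key3 := congrArg G3 coas
  simp only [map_sum, hG3, hinner2, LinearMap.comp_apply, TensorProduct.map_tmul,
    LinearMap.lTensor_tmul, LinearEquiv.coe_coe, TensorProduct.rid_tmul, LinearMap.id_coe,
    id_eq, map_smul, LinearMap.mul'_apply] at key2 key3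
  -- rewrite RHS of key2 using h
  have hmid : ∀ i ∈ r.index, ∑ j ∈ (e i).index,
      r.left i * (φ ((e i).left j) • S ((e i).right j)) =
      ∑ j ∈ (e i).index, r.left i * (φ ((e i).right j) • S ((e i).left j)) := by
    intro i _
    rw [← Finset.mul_sum, ← Finset.mul_sum]
    congr 1
    have : S (Lm φ (r.right i)) = S (Rm φ (r.right i)) := by rw [h]
    rw [Lm_repr φ (e i), Rm_repr φ (e i), map_sum, map_sum] at this
    simpa [map_smul] using this
  rw [Finset.sum_congr rfl hmid] at key2
  rw [← key3] at key2
  -- now key2 : ∑ᵢⱼ uᵢⱼ * (φ(vᵢⱼ) • S yᵢ) = ∑ᵢⱼ uᵢⱼ * (φ(yᵢ) • S vᵢⱼ)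
  rw [T_repr φ r c]
  calc ∑ i ∈ r.index, ∑ j ∈ (c i).index,
      φ ((c i).right j) • ((c i).left j * S (r.right i))
      = ∑ i ∈ r.index, ∑ j ∈ (c i).index,
          (c i).left j * (φ ((c i).right j) • S (r.right i)) := by
        refine Finset.sum_congr rfl fun i _ => Finset.sum_congr rfl fun j _ => ?_
        rw [mul_smul_comm]
    _ = ∑ i ∈ r.index, ∑ j ∈ (c i).index,
          (c i).left j * (φ (r.right i) • S ((c i).right j)) := key2
    _ = ∑ i ∈ r.index, φ (r.right i) •
          ∑ j ∈ (c i).index, (c i).left j * S ((c i).right j) := by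
        refine Finset.sum_congr rfl fun i _ => ?_
        rw [Finset.smul_sum]
        exact Finset.sum_congr rfl fun j _ => mul_smul_comm _ _ _
    _ = ∑ i ∈ r.index, φ (r.right i) • (Coalgebra.counit (R := ℂ) (r.left i) • (1 : A)) := by
        refine Finset.sum_congr rfl fun i _ => ?_
        rw [HopfAlgebra.sum_mul_antipode_eq_smul (c i)]
    _ = φ (∑ i ∈ r.index, Coalgebra.counit (R := ℂ) (r.left i) • r.right i) • (1 : A) := by
        rw [map_sum, Finset.sum_smul]
        refine Finset.sum_congr rfl fun i _ => ?_
        rw [map_smul, smul_smul]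
        simp [smul_eq_mul, mul_comm]
    _ = φ a • (1 : A) := by rw [sum_smul_counit (b := a) r]

end Aux

theorem adInvariant_iff_central (φ : A →ₗ[ℂ] ℂ) :
    IsAdInvariant φ ↔ ∀ ψ : A →ₗ[ℂ] ℂ, conv φ ψ = conv ψ φ := by
  rw [central_iff_LR]
  exact ⟨LR_of_adInv φ, adInv_of_LR φ⟩
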